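/- For every integer k ≥ 2 there exist real polynomials f*_k and f_k such that for every real number p ≥ 1 one has f_k(p·(p+1)) ≠ 0, P_k(2p+1) ≠ 0, and (2p+1)·P*_k(2p+1)/P_k(2p+1) - 1 = f*_k(p·(p+1)) / f_k(p·(p+1)). That is, p_k(2p+1) := (2p+1)·P*_k(2p+1)/P_k(2p+1) - 1 is a rational function of z = p(p+1). -/
import Mathlib


open Polynomial

/-- Legendre polynomials: `(k+1)·y_{k+1}(x) = (2k+1)·x·y_k(x) - k·y_{k-1}(x)`,
`P_0 = 1`, `P_1 = x`. -/
noncomputable def legP : ℕ → Polynomial ℝ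
  | 0 => 1
  | 1 => X
  | (k+2) => C ((2 * (k : ℝ) + 3) / ((k : ℝ) + 2)) * (X * legP (k+1))
      - C (((k : ℝ) + 1) / ((k : ℝ) + 2)) * legP k

/-- Associated (numerator) Legendre polynomials: same recurrence,
`P*_0 = 0`, `P*_1 = 1`. -/
noncomputable def legPs : ℕ → Polynomial ℝ
  | 0 => 0
  | 1 => 1
  | (k+2) => C ((2 * (k : ℝ) + 3) / ((k : ℝ) + 2)) * (X * legPs (k+1))
      - C (((k : ℝ) + 1) / ((k : ℝ) + 2)) * legPs k

lemma step_even (α β : ℝ) (a c : Polynomial ℝ) :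
    C α * (X * (X * c.comp (X^2))) - C β * a.comp (X^2)
      = (C α * (X * c) - C β * a).comp (X^2) := by
  simp only [sub_comp, mul_comp, C_comp, X_comp]; ring

lemma step_odd (α β : ℝ) (u v : Polynomial ℝ) :
    C α * (X * u.comp (X^2)) - C β * (X * v.comp (X^2))
      = X * (C α * u - C β * v).comp (X^2) := by
  simp only [sub_comp, mul_comp, C_comp, X_comp]; ring

lemma parity (m : ℕ) :
    (∃ a b : Polynomial ℝ, legP (2*m) = a.comp (X^2) ∧ legPs (2*m) = X * b.comp (X^2)) ∧
    (∃ c d : Polynomial ℝ, legP (2*m+1) = X * c.comp (X^2) ∧ legPs (2*m+1) = d.comp (X^2)) := by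
  induction m with
  | zero => exact ⟨⟨1, 0, by simp [legP], by simp [legPs]⟩, 1, 1, by simp [legP], by simp [legPs]⟩
  | succ m ih =>
    obtain ⟨⟨a, b, ha, hb⟩, c, d, hc, hd⟩ := ih
    obtain ⟨a2, e1⟩ : ∃ q : Polynomial ℝ, legP (2*m+2) = q.comp (X^2) :=
      ⟨_, by rw [legP, hc, ha]; exact step_even _ _ _ _⟩
    obtain ⟨b2, e2⟩ : ∃ q : Polynomial ℝ, legPs (2*m+2) = X * q.comp (X^2) :=
      ⟨_, by rw [legPs, hd, hb]; exact step_odd _ _ _ _⟩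
    obtain ⟨c2, e3⟩ : ∃ q : Polynomial ℝ, legP (2*m+3) = X * q.comp (X^2) :=
      ⟨_, by rw [show 2*m+3 = (2*m+1)+2 by omega, legP,
            show (2*m+1)+1 = 2*m+2 by omega, e1, hc]; exact step_odd _ _ _ _⟩
    obtain ⟨d2, e4⟩ : ∃ q : Polynomial ℝ, legPs (2*m+3) = q.comp (X^2) :=
      ⟨_, by rw [show 2*m+3 = (2*m+1)+2 by omega, legPs,
            show (2*m+1)+1 = 2*m+2 by omega, e2, hd]; exact step_even _ _ _ _⟩
    constructor
    · exact ⟨a2, b2, by rw [show 2*(m+1) = 2*m+2 by omega]; exact e1,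
        by rw [show 2*(m+1) = 2*m+2 by omega]; exact e2⟩
    · exact ⟨c2, d2, by rw [show 2*(m+1)+1 = 2*m+3 by omega]; exact e3,
        by rw [show 2*(m+1)+1 = 2*m+3 by omega]; exact e4⟩

lemma legP_ge (k : ℕ) : ∀ x : ℝ, 1 ≤ x →
    1 ≤ (legP k).eval x ∧ (legP k).eval x ≤ (legP (k+1)).eval x := by
  induction k with
  | zero => intro x hx; constructor <;> simp [legP, hx]
  | succ k ih =>
    intro x hx
    obtain ⟨h1, h2⟩ := ih x hx
    refine ⟨by linarith, ?_⟩
    have e : (legP (k+2)).eval x = ((2*(k:ℝ)+3)/((k:ℝ)+2)) * (x * (legP (k+1)).eval x)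
        - (((k:ℝ)+1)/((k:ℝ)+2)) * (legP k).eval x := by
      rw [legP]; simp
    rw [e]
    have hk2 : (0:ℝ) < (k:ℝ)+2 := by positivity
    rw [div_mul_eq_mul_div, div_mul_eq_mul_div, ← sub_div, le_div_iff₀ hk2]
    have h3 : 0 ≤ (2*(k:ℝ)+3) * (legP (k+1)).eval x * (x-1) := by
      apply mul_nonneg (mul_nonneg (by positivity) (by linarith)) (by linarith)
    have h4 : 0 ≤ ((k:ℝ)+1) * ((legP (k+1)).eval x - (legP k).eval x) := by
      apply mul_nonneg (by positivity) (by linarith)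
    nlinarith [h3, h4]

/-- For `k ≥ 2`, `p_k(2p+1) := (2p+1)·P*_k(2p+1)/P_k(2p+1) - 1` is a rational
function of `z = p(p+1)`. -/
theorem legendre_ratio_rational_in_z (k : ℕ) (hk : 2 ≤ k) :
    ∃ fs f : Polynomial ℝ, ∀ p : ℝ, 1 ≤ p →
      f.eval (p * (p + 1)) ≠ 0 ∧ (legP k).eval (2*p + 1) ≠ 0 ∧
      (2*p + 1) * (legPs k).eval (2*p + 1) / (legP k).eval (2*p + 1) - 1 =
        fs.eval (p * (p + 1)) / f.eval (p * (p + 1)) := by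
  rcases Nat.even_or_odd k with h | h
  · obtain ⟨m, hm⟩ := h
    have hk2 : k = 2*m := by omega
    subst hk2
    obtain ⟨⟨a, b, ha, hb⟩, -⟩ := parity m
    refine ⟨(C 4 * X + 1) * b.comp (C 4 * X + 1) - a.comp (C 4 * X + 1),
      a.comp (C 4 * X + 1), fun p hp => ?_⟩
    have hx : (1:ℝ) ≤ 2*p+1 := by linarith
    have hsq : (4 : ℝ) * (p*(p+1)) + 1 = (2*p+1)^2 := by ring
    have hf : (a.comp (C 4 * X + 1)).eval (p*(p+1)) = (legP (2*m)).eval (2*p+1) := by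
      rw [ha]
      simp only [eval_comp, eval_add, eval_mul, eval_C, eval_X, eval_one, eval_pow]
      rw [hsq]
    have hP : 1 ≤ (legP (2*m)).eval (2*p+1) := (legP_ge _ _ hx).1
    have hPne : (legP (2*m)).eval (2*p+1) ≠ 0 := by positivity
    have hfne : (a.comp (C 4 * X + 1)).eval (p*(p+1)) ≠ 0 := by rw [hf]; exact hPne
    have hfs : ((C 4 * X + 1) * b.comp (C 4 * X + 1) - a.comp (C 4 * X + 1)).eval (p*(p+1))
        = (2*p+1) * (legPs (2*m)).eval (2*p+1) - (legP (2*m)).eval (2*p+1) := by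
      rw [hb, ha]
      simp only [eval_sub, eval_comp, eval_add, eval_mul, eval_C, eval_X, eval_one, eval_pow]
      rw [hsq]; ring
    refine ⟨hfne, hPne, ?_⟩
    rw [hf, hfs, div_sub_one hPne]
  · obtain ⟨m, hm⟩ := h
    subst hm
    obtain ⟨-, c, d, hc, hd⟩ := parity m
    refine ⟨d.comp (C 4 * X + 1) - c.comp (C 4 * X + 1), c.comp (C 4 * X + 1),
      fun p hp => ?_⟩
    have hx : (1:ℝ) ≤ 2*p+1 := by linarith
    have hxpos : (0:ℝ) < 2*p+1 := by linarith
    have hsq : (4 : ℝ) * (p*(p+1)) + 1 = (2*p+1)^2 := by ring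
    have hPeval : (legP (2*m+1)).eval (2*p+1) = (2*p+1) * c.eval ((2*p+1)^2) := by
      rw [hc]; simp [eval_comp]
    have hPseval : (legPs (2*m+1)).eval (2*p+1) = d.eval ((2*p+1)^2) := by
      rw [hd]; simp [eval_comp]
    have hP : 1 ≤ (legP (2*m+1)).eval (2*p+1) := (legP_ge _ _ hx).1
    have hP' : 1 ≤ (2*p+1) * c.eval ((2*p+1)^2) := by rw [← hPeval]; exact hP
    have hc0 : 0 < c.eval ((2*p+1)^2) := by nlinarith [hP', hx]
    have hfeval : (c.comp (C 4 * X + 1)).eval (p*(p+1)) = c.eval ((2*p+1)^2) := by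
      simp only [eval_comp, eval_add, eval_mul, eval_C, eval_X, eval_one]
      rw [hsq]
    have hfseval : (d.comp (C 4 * X + 1) - c.comp (C 4 * X + 1)).eval (p*(p+1))
        = d.eval ((2*p+1)^2) - c.eval ((2*p+1)^2) := by
      simp only [eval_sub, eval_comp, eval_add, eval_mul, eval_C, eval_X, eval_one]
      rw [hsq]
    have hPne : (legP (2*m+1)).eval (2*p+1) ≠ 0 := by positivity
    refine ⟨by rw [hfeval]; exact hc0.ne', hPne, ?_⟩
    rw [div_sub_one hPne, hfeval, hfseval, hPeval, hPseval,
      div_eq_div_iff (by rw [← hPeval]; exact hPne) hc0.ne']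
    ring
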